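/- Let $G$ be a group with finite symmetric generating set $S$, equipped with the left-invariant word metric $d_S$, acting transitively by isometries on a metric space $M$, and fix a basepoint $x_0 \in M$. Suppose that $M$ has asymptotic property C and that there exists $n \in \mathbb{N}$ such that for all $R > 0$ the quasi-stabilizer $W_R(x_0)$ (with the metric induced from $d_S$) has asymptotic dimension at most $n$. Then $G$ (with the word metric $d_S$) has asymptotic property C. -/

import Mathlib

open Metric Set ENNReal

/-- The distance between two subsets of a (pseudo e)metric space, valued in `ℝ≥0∞`
(so that the distance to/from the empty set is `∞`). -/
noncomputable def setEDist {X : Type*} [PseudoEMetricSpace X] (A B : Set X) : ℝ≥0∞ :=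
  ⨅ a ∈ A, ⨅ b ∈ B, edist a b

/-- A family `ℱ` of subsets of a metric space is `r`-disjoint if any two distinct members
are at distance greater than `r` from each other. -/
def RDisjoint {X : Type*} [PseudoMetricSpace X] (r : ℝ) (ℱ : Set (Set X)) : Prop :=
  ∀ F₁ ∈ ℱ, ∀ F₂ ∈ ℱ, F₁ ≠ F₂ → ENNReal.ofReal r < setEDist F₁ F₂

/-- A family `ℱ` of subsets of a metric space is uniformly bounded if there is `R > 0`
bounding the diameter of every member. -/
def UniformlyBounded {X : Type*} [PseudoMetricSpace X] (ℱ : Set (Set X)) : Prop :=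
  ∃ R > (0 : ℝ), ∀ F ∈ ℱ, ∀ x ∈ F, ∀ y ∈ F, dist x y ≤ R

/-- A metric space `X` has asymptotic dimension at most `n` if for every `r > 0` there are
`n + 1` uniformly bounded, `r`-disjoint families of subsets of `X` whose union covers `X`. -/
def AsDimLE (X : Type*) [PseudoMetricSpace X] (n : ℕ) : Prop :=
  ∀ r > (0 : ℝ), ∃ ℱ : Fin (n + 1) → Set (Set X),
    (∀ i, UniformlyBounded (ℱ i)) ∧ (∀ i, RDisjoint r (ℱ i)) ∧
    (⋃ i, ⋃ F ∈ ℱ i, F) = univ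

/-- A metric space `X` has asymptotic property C if for every sequence of real numbers
`0 < r 0 < r 1 < ⋯` there are `n ∈ ℕ` and uniformly bounded families `ℱ 0, …, ℱ n` of subsets
of `X` such that each `ℱ i` is `r i`-disjoint and the union of the families covers `X`. -/
def AsymptoticPropertyC (X : Type*) [PseudoMetricSpace X] : Prop :=
  ∀ r : ℕ → ℝ, 0 < r 0 → StrictMono r →
    ∃ (n : ℕ) (ℱ : Fin (n + 1) → Set (Set X)),
      (∀ i, UniformlyBounded (ℱ i)) ∧
      (∀ i : Fin (n + 1), RDisjoint (r i.val) (ℱ i)) ∧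
      (⋃ i, ⋃ F ∈ ℱ i, F) = univ

/-- The word length of `g` with respect to a generating set `S`: the minimal length of a
word in `S` whose product is `g`. -/
noncomputable def wordLength {G : Type*} [Group G] (S : Set G) (g : G) : ℕ :=
  sInf {n : ℕ | ∃ w : List G, (∀ x ∈ w, x ∈ S) ∧ w.length = n ∧ w.prod = g}

lemma setEDist_le_setEDist {X : Type*} [PseudoEMetricSpace X] {A B A' B' : Set X}
    (hA : A' ⊆ A) (hB : B' ⊆ B) : setEDist A B ≤ setEDist A' B' :=
  le_iInf₂ fun a ha => le_iInf₂ fun b hb =>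
    iInf₂_le_of_le a (hA ha) (iInf₂_le_of_le b (hB hb) le_rfl)

lemma le_setEDist {X : Type*} [PseudoEMetricSpace X] {A B : Set X} {c : ℝ≥0∞}
    (h : ∀ a ∈ A, ∀ b ∈ B, c ≤ edist a b) : c ≤ setEDist A B :=
  le_iInf₂ fun a ha => le_iInf₂ fun b hb => h a ha b hb

lemma setEDist_le_edist {X : Type*} [PseudoEMetricSpace X] {A B : Set X} {a b : X}
    (ha : a ∈ A) (hb : b ∈ B) : setEDist A B ≤ edist a b :=
  iInf₂_le_of_le a ha (iInf₂_le_of_le b hb le_rfl)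

lemma setEDist_image {X Y : Type*} [PseudoEMetricSpace X] [PseudoEMetricSpace Y]
    {f : X → Y} (hf : ∀ a b, edist (f a) (f b) = edist a b) (A B : Set X) :
    setEDist (f '' A) (f '' B) = setEDist A B := by
  simp only [setEDist, iInf_image, hf]

/-- If a group `G` with finite symmetric generating set `S`, equipped with the left-invariant
word metric, acts transitively by isometries on a metric space `M` which has asymptotic
property C, and there is `n` such that every quasi-stabilizer `W_R(x₀)` (with the induced
metric) has asymptotic dimension at most `n`, then `G` has asymptotic property C. -/
theorem asymptoticPropertyC_of_isometric_action
    {G M : Type*} [Group G] [MetricSpace G] [MetricSpace M] [MulAction G M]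
    (S : Set G) (hSfin : S.Finite) (hSsymm : S⁻¹ = S)
    (hSgen : Subgroup.closure S = ⊤)
    (hword : ∀ g h : G, dist g h = (wordLength S (g⁻¹ * h) : ℝ))
    (hiso : ∀ (g : G) (y z : M), dist (g • y) (g • z) = dist y z)
    (htrans : ∀ y z : M, ∃ g : G, g • y = z)
    (x₀ : M)
    (hM : AsymptoticPropertyC M)
    (n : ℕ)
    (hW : ∀ R > (0 : ℝ), AsDimLE ↥{g : G | dist x₀ (g • x₀) ≤ R} n) :
    AsymptoticPropertyC G := by
  intro r hr0 hrmono
  have hrpos : ∀ k, 0 < r k := fun k => by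
    rcases Nat.eq_zero_or_pos k with h | h
    · simpa [h] using hr0
    · exact hr0.trans (hrmono h)
  -- a Lipschitz constant for the orbit map
  obtain ⟨C, hC1, hCS⟩ : ∃ C : ℝ, 1 ≤ C ∧ ∀ s ∈ S, dist x₀ (s • x₀) ≤ C := by
    obtain ⟨C₀, hC₀⟩ := (hSfin.image (fun s => dist x₀ (s • x₀))).bddAbove
    exact ⟨max C₀ 1, le_max_right _ _,
      fun s hs => le_trans (hC₀ (mem_image_of_mem _ hs)) (le_max_left _ _)⟩
  have hCpos : (0 : ℝ) < C := lt_of_lt_of_le one_pos hC1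
  -- every group element is a product of a word in S of length its word length
  have hword_exists : ∀ g : G, ∃ w : List G,
      (∀ x ∈ w, x ∈ S) ∧ w.length = wordLength S g ∧ w.prod = g := by
    intro g
    have hg : g ∈ (Subgroup.closure S).toSubmonoid := by
      rw [hSgen]; trivial
    rw [Subgroup.closure_toSubmonoid] at hg
    obtain ⟨w, hwS, hwp⟩ := Submonoid.exists_list_of_mem_closure hg
    have hwS' : ∀ x ∈ w, x ∈ S := by
      intro x hx
      rcases hwS x hx with h | h
      · exact h
      · rw [← hSsymm]; exact Set.mem_inv.mpr h
    have hne : {m : ℕ | ∃ w : List G, (∀ x ∈ w, x ∈ S) ∧ w.length = m ∧ w.prod = g}.Nonempty :=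
      ⟨w.length, w, hwS', rfl, hwp⟩
    obtain ⟨w', hw'⟩ := Nat.sInf_mem hne
    exact ⟨w', hw'.1, hw'.2.1, hw'.2.2⟩
  -- the orbit map is C-Lipschitz
  have hlip : ∀ g h : G, dist (g • x₀) (h • x₀) ≤ C * dist g h := by
    intro g h
    obtain ⟨w, hwS, hwl, hwp⟩ := hword_exists (g⁻¹ * h)
    have key : ∀ w : List G, (∀ x ∈ w, x ∈ S) →
        dist x₀ (w.prod • x₀) ≤ C * w.length := by
      intro w
      induction w with
      | nil => intro _; simp
      | cons a t ih =>
        intro hw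
        have h1 : dist x₀ ((a :: t).prod • x₀)
            ≤ dist x₀ (a • x₀) + dist (a • x₀) ((a * t.prod) • x₀) := by
          rw [List.prod_cons]; exact dist_triangle _ _ _
        have h2 : dist (a • x₀) ((a * t.prod) • x₀) = dist x₀ (t.prod • x₀) := by
          rw [mul_smul]; exact hiso a x₀ (t.prod • x₀)
        have h3 := ih (fun x hx => hw x (List.mem_cons_of_mem a hx))
        have h4 := hCS a (hw a List.mem_cons_self)
        calc dist x₀ ((a :: t).prod • x₀)
            ≤ C + C * t.length := by rw [h2] at h1; linarith
          _ = C * (a :: t).length := by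
              rw [List.length_cons]; push_cast; ring
    have := key w hwS
    rw [hwp, hwl] at this
    have h5 : dist (g • x₀) (h • x₀) = dist x₀ ((g⁻¹ * h) • x₀) := by
      have := hiso g x₀ ((g⁻¹ * h) • x₀)
      rw [smul_smul, mul_inv_cancel_left] at this
      exact this
    rw [h5, hword g h]
    exact this
  -- left translations are isometries of G
  have hGiso : ∀ k g h : G, dist (k * g) (k * h) = dist g h := by
    intro k g h
    rw [hword (k * g) (k * h), hword g h, mul_inv_rev, mul_assoc, inv_mul_cancel_left]
  have hGisoe : ∀ k g h : G, edist (k * g) (k * h) = edist g h := by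
    intro k g h; rw [edist_dist, edist_dist, hGiso]
  -- the orbit map
  set π : G → M := fun g => g • x₀ with hπ
  -- apply property C of M with inflated scales
  set s : ℕ → ℝ := fun j => C * r (j * (n + 1) + n + 1) with hs
  have hs0 : 0 < s 0 := by
    simp only [hs, Nat.zero_mul, Nat.zero_add]
    exact mul_pos hCpos (hrpos _)
  have hsmono : StrictMono s := by
    intro a b hab
    have h1 : a * (n + 1) < b * (n + 1) := by
      exact Nat.mul_lt_mul_of_lt_of_le hab (le_refl (n + 1)) (Nat.succ_pos n)
    exact mul_lt_mul_of_pos_left (hrmono (by omega)) hCpos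
  obtain ⟨m, 𝓕, h𝓕b, h𝓕d, h𝓕c⟩ := hM s hs0 hsmono
  -- diameters of the families in M
  choose D hDpos hDb using h𝓕b
  -- decompose the quasi-stabilizers
  have hρpos : ∀ j : Fin (m + 1), (0 : ℝ) < r ((j : ℕ) * (n + 1) + n + 1) := fun j => hrpos _
  choose 𝒢 h𝒢b h𝒢d h𝒢c using fun j : Fin (m + 1) =>
    hW (D j) (hDpos j) (r ((j : ℕ) * (n + 1) + n + 1)) (hρpos j)
  choose B hBpos hBb using fun j => h𝒢b j
  -- choose base points
  have hgF : ∀ F : Set M, F.Nonempty → ∃ g : G, g • x₀ ∈ F := by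
    rintro F ⟨y, hy⟩
    obtain ⟨g, hg⟩ := htrans x₀ y
    exact ⟨g, by rwa [hg]⟩
  classical
  set gF : Set M → G := fun F => if h : F.Nonempty then (hgF F h).choose else 1 with hgFdef
  have hgFmem : ∀ F : Set M, F.Nonempty → gF F • x₀ ∈ F := by
    intro F h
    simp only [hgFdef, dif_pos h]
    exact (hgF F h).choose_spec
  -- the final families
  refine ⟨m * (n + 1) + n, fun k =>
    {T | ∃ j : Fin (m + 1), (j : ℕ) = (k : ℕ) / (n + 1) ∧
      ∃ F ∈ 𝓕 j, ∃ A ∈ 𝒢 j ⟨(k : ℕ) % (n + 1), Nat.mod_lt _ (Nat.succ_pos n)⟩,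
        T = (fun p : ↥{g : G | dist x₀ (g • x₀) ≤ D j} => gF F * (p : G)) '' A ∩ π ⁻¹' F},
    ?_, ?_, ?_⟩
  · -- uniformly bounded
    intro k
    have hjlt : (k : ℕ) / (n + 1) < m + 1 := by
      have hk := k.isLt
      rw [Nat.div_lt_iff_lt_mul (by omega : 0 < n + 1)]
      have he : (m + 1) * (n + 1) = m * (n + 1) + n + 1 := by ring
      omega
    refine ⟨B ⟨(k : ℕ) / (n + 1), hjlt⟩ ⟨(k : ℕ) % (n + 1), Nat.mod_lt _ (Nat.succ_pos n)⟩,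
      hBpos _ _, ?_⟩
    rintro T ⟨j, hj, F, hF, A, hA, rfl⟩ x ⟨⟨a, ha, rfl⟩, -⟩ y ⟨⟨b, hb, rfl⟩, -⟩
    have hjeq : j = ⟨(k : ℕ) / (n + 1), hjlt⟩ := Fin.ext hj
    subst hjeq
    rw [hGiso]
    rw [show dist (a : G) (b : G) = dist a b from rfl]
    exact hBb _ _ A hA a ha b hb
  · -- r k-disjoint
    intro k T₁ hT₁ T₂ hT₂ hne
    obtain ⟨j₁, hj₁, F₁, hF₁, A₁, hA₁, rfl⟩ := hT₁
    obtain ⟨j₂, hj₂, F₂, hF₂, A₂, hA₂, rfl⟩ := hT₂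
    have hjeq : j₁ = j₂ := Fin.ext (hj₁.trans hj₂.symm)
    subst hjeq
    have hkle : (k : ℕ) < (j₁ : ℕ) * (n + 1) + n + 1 := by
      have hdm := Nat.div_add_mod (k : ℕ) (n + 1)
      have h2 : (k : ℕ) % (n + 1) < n + 1 := Nat.mod_lt _ (Nat.succ_pos n)
      have h3 : (j₁ : ℕ) * (n + 1) = (n + 1) * ((k : ℕ) / (n + 1)) := by
        rw [hj₁, Nat.mul_comm]
      omega
    have hrk : r (k : ℕ) < r ((j₁ : ℕ) * (n + 1) + n + 1) := hrmono hkle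
    by_cases hFeq : F₁ = F₂
    · subst hFeq
      have hAne : A₁ ≠ A₂ := by rintro rfl; exact hne rfl
      have hd := h𝒢d j₁ ⟨(k : ℕ) % (n + 1), Nat.mod_lt _ (Nat.succ_pos n)⟩ A₁ hA₁ A₂ hA₂ hAne
      have himg : setEDist
          ((fun p : ↥{g : G | dist x₀ (g • x₀) ≤ D j₁} => gF F₁ * (p : G)) '' A₁)
          ((fun p : ↥{g : G | dist x₀ (g • x₀) ≤ D j₁} => gF F₁ * (p : G)) '' A₂)
          = setEDist A₁ A₂ := by
        apply setEDist_image
        intro a b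
        rw [hGisoe]
        rfl
      calc ENNReal.ofReal (r (k : ℕ))
          ≤ ENNReal.ofReal (r ((j₁ : ℕ) * (n + 1) + n + 1)) := ENNReal.ofReal_le_ofReal hrk.le
        _ < setEDist A₁ A₂ := hd
        _ = _ := himg.symm
        _ ≤ setEDist _ _ := setEDist_le_setEDist inter_subset_left inter_subset_left
    · -- distinct sets of the M-family: far apart
      have hd := h𝓕d j₁ F₁ hF₁ F₂ hF₂ hFeq
      refine lt_of_lt_of_le (ENNReal.ofReal_lt_ofReal_iff_of_nonneg (hrpos _).le |>.mpr hrk)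
        (le_setEDist ?_)
      rintro a ⟨-, ha⟩ b ⟨-, hb⟩
      have hab : setEDist F₁ F₂ ≤ edist (π a) (π b) := setEDist_le_edist ha hb
      have h1 : ENNReal.ofReal (s (j₁ : ℕ)) < ENNReal.ofReal (C * dist a b) := by
        refine lt_of_lt_of_le (hd.trans_le hab) ?_
        rw [edist_dist]
        exact ENNReal.ofReal_le_ofReal (hlip a b)
      have h2 : s (j₁ : ℕ) < C * dist a b := by
        by_contra hcon
        push_neg at hcon
        exact absurd (ENNReal.ofReal_le_ofReal hcon) (not_le.mpr h1)
      have h3 : r ((j₁ : ℕ) * (n + 1) + n + 1) < dist a b := by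
        have := (mul_lt_mul_iff_right₀ hCpos).mp h2
        exact this
      rw [edist_dist]
      exact ENNReal.ofReal_le_ofReal h3.le
  · -- covering
    apply eq_univ_of_forall
    intro g
    have hgM : π g ∈ ⋃ j, ⋃ F ∈ 𝓕 j, F := by rw [h𝓕c]; trivial
    obtain ⟨_, ⟨j, rfl⟩, hFU⟩ := hgM
    obtain ⟨F, hF, hgF'⟩ := by simpa using hFU
    have hFne : F.Nonempty := ⟨π g, hgF'⟩
    have hgFm := hgFmem F hFne
    set q : G := (gF F)⁻¹ * g with hq
    have hqW : dist x₀ (q • x₀) ≤ D j := by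
      have h1 : dist x₀ (q • x₀) = dist (gF F • x₀) (g • x₀) := by
        have := hiso (gF F) x₀ (q • x₀)
        rw [smul_smul, hq, mul_inv_cancel_left] at this
        exact this.symm
      rw [h1]
      exact hDb j F hF _ hgFm _ hgF'
    have hqmem : (⟨q, hqW⟩ : ↥{g : G | dist x₀ (g • x₀) ≤ D j}) ∈
        ⋃ i, ⋃ A ∈ 𝒢 j i, A := by rw [h𝒢c]; trivial
    obtain ⟨_, ⟨i, rfl⟩, hAU⟩ := hqmem
    obtain ⟨A, hA, hqA⟩ := by simpa using hAU
    -- the index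
    set k : ℕ := (j : ℕ) * (n + 1) + (i : ℕ) with hk
    have hklt : k < m * (n + 1) + n + 1 := by
      have h1 := j.isLt
      have h2 := i.isLt
      have : (j : ℕ) * (n + 1) ≤ m * (n + 1) := Nat.mul_le_mul_right _ (by omega)
      omega
    have hkdiv : k / (n + 1) = (j : ℕ) := by
      rw [hk, Nat.add_comm, Nat.add_mul_div_right _ _ (Nat.succ_pos n),
        Nat.div_eq_of_lt i.isLt, Nat.zero_add]
    have hkmod : k % (n + 1) = (i : ℕ) := by
      rw [hk, Nat.add_comm, Nat.add_mul_mod_self_right, Nat.mod_eq_of_lt i.isLt]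
    refine mem_iUnion.mpr ⟨⟨k, hklt⟩, ?_⟩
    refine mem_iUnion₂.mpr ⟨_, ⟨j, by simp [hkdiv], F, hF, A, ?_, rfl⟩, ?_⟩
    · convert hA using 2
      exact Fin.ext (by simpa using hkmod)
    · constructor
      · exact ⟨⟨q, hqW⟩, hqA, by show gF F * q = g; rw [hq, mul_inv_cancel_left]⟩
      · exact hgF'
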